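/- Let A be symmetric with eigendecomposition A = VΛV^T + V_⊥Λ_⊥V_⊥^T, where the diagonal entries of Λ are λ₁ ≥ ... ≥ λ_r > 0 and those of Λ_⊥ have absolute value at most λ_{r+1} < λ_r. Suppose Q_t R_t = A^t Q₀ with R_t invertible and ‖R_t^{-1}‖₂ ≤ λ_r^{-t}/√(1−d₀²), where d₀ := ‖V_⊥^T Q₀‖₂ < 1. If additionally ‖V_⊥ Λ_⊥^t V_⊥^T‖_∞ ≤ C λ_{r+1}^t ‖V_⊥ V_⊥^T‖_∞, then ‖V_⊥ V_⊥^T Q_t‖_{2→∞} ≤ (λ_{r+1}/λ_r)^t · C ‖V_⊥ V_⊥^T‖_∞ · dist_{2→∞}(Q₀, V) / √(1−d₀²). -/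

import Mathlib

open Matrix BigOperators

/-- ℓ2 norm of the i-th row of a matrix. -/
noncomputable def row2 {m n : ℕ} (A : Matrix (Fin m) (Fin n) ℝ) (i : Fin m) : ℝ :=
  Real.sqrt (∑ j, (A i j) ^ 2)

/-- The ℓ2→∞ norm: maximum row ℓ2 norm. -/
noncomputable def norm2inf {m n : ℕ} (A : Matrix (Fin m) (Fin n) ℝ) : ℝ :=
  ⨆ i, row2 A i

/-- The ℓ∞→ℓ∞ operator norm: maximum row ℓ1 norm. -/
noncomputable def normInfOp {m n : ℕ} (A : Matrix (Fin m) (Fin n) ℝ) : ℝ :=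
  ⨆ i, ∑ j, |A i j|

/-- The spectral (ℓ2 operator) norm: sup over unit vectors of ‖Ax‖₂. -/
noncomputable def specNorm {m n : ℕ} (A : Matrix (Fin m) (Fin n) ℝ) : ℝ :=
  ⨆ x : {x : Fin n → ℝ // ∑ j, (x j) ^ 2 = 1}, Real.sqrt (∑ i, (A.mulVec x.1 i) ^ 2)

/-- The Frobenius norm. -/
noncomputable def frobNorm {m n : ℕ} (A : Matrix (Fin m) (Fin n) ℝ) : ℝ :=
  Real.sqrt (∑ i, ∑ j, (A i j) ^ 2)

/-- The smallest singular value: inf over unit vectors of ‖Mx‖₂. -/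
noncomputable def sigmaMin {r : ℕ} (M : Matrix (Fin r) (Fin r) ℝ) : ℝ :=
  ⨅ x : {x : Fin r → ℝ // ∑ j, (x j) ^ 2 = 1}, Real.sqrt (∑ i, (M.mulVec x.1 i) ^ 2)

/-- The ℓ2→∞ subspace distance: inf over orthogonal Z of ‖Q - V Z‖_{2→∞}. -/
noncomputable def dist2inf {n r : ℕ} (Q V : Matrix (Fin n) (Fin r) ℝ) : ℝ :=
  ⨅ Z : {Z : Matrix (Fin r) (Fin r) ℝ // Zᵀ * Z = 1}, norm2inf (Q - V * Z.1)
noncomputable def en {k : ℕ} (x : Fin k → ℝ) : ℝ := Real.sqrt (∑ j, x j ^ 2)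

lemma en_nonneg {k : ℕ} (x : Fin k → ℝ) : 0 ≤ en x := Real.sqrt_nonneg _

lemma en_eq_norm {k : ℕ} (x : Fin k → ℝ) :
    en x = ‖(WithLp.equiv 2 (Fin k → ℝ)).symm x‖ := by
  rw [EuclideanSpace.norm_eq]
  simp [en, Real.norm_eq_abs, sq_abs]

lemma en_sum_le {k : ℕ} {ι : Type*} (s : Finset ι) (f : ι → Fin k → ℝ) :
    en (∑ j ∈ s, f j) ≤ ∑ j ∈ s, en (f j) := by
  simp only [en_eq_norm]
  have h : (WithLp.equiv 2 (Fin k → ℝ)).symm (∑ j ∈ s, f j)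
      = ∑ j ∈ s, (WithLp.equiv 2 (Fin k → ℝ)).symm (f j) := WithLp.toLp_sum (p := 2) (s := s) (f := f)
  rw [h]
  exact norm_sum_le _ _

lemma en_smul {k : ℕ} (c : ℝ) (x : Fin k → ℝ) : en (c • x) = |c| * en x := by
  simp only [en_eq_norm]
  have h : (WithLp.equiv 2 (Fin k → ℝ)).symm (c • x)
      = c • (WithLp.equiv 2 (Fin k → ℝ)).symm x := rfl
  rw [h, norm_smul, Real.norm_eq_abs]

lemma cs_sum {k : ℕ} (x y : Fin k → ℝ) : ∑ j, x j * y j ≤ en x * en y := by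
  calc ∑ j, x j * y j ≤ |∑ j, x j * y j| := le_abs_self _
    _ = Real.sqrt ((∑ j, x j * y j) ^ 2) := (Real.sqrt_sq_eq_abs _).symm
    _ ≤ Real.sqrt ((∑ j, x j ^ 2) * (∑ j, y j ^ 2)) :=
        Real.sqrt_le_sqrt (Finset.sum_mul_sq_le_sq_mul_sq _ _ _)
    _ = en x * en y := Real.sqrt_mul (by positivity) _

lemma en_mulVec_le_frob {m k : ℕ} (M : Matrix (Fin m) (Fin k) ℝ) (x : Fin k → ℝ) :
    en (M.mulVec x) ≤ frobNorm M * en x := by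
  have key : ∑ i, (M.mulVec x i) ^ 2 ≤ (∑ i, ∑ j, M i j ^ 2) * (∑ j, x j ^ 2) := by
    rw [Finset.sum_mul]
    apply Finset.sum_le_sum
    intro i _
    have h : M.mulVec x i = ∑ j, M i j * x j := rfl
    rw [h]
    exact Finset.sum_mul_sq_le_sq_mul_sq _ _ _
  calc en (M.mulVec x) ≤ Real.sqrt ((∑ i, ∑ j, M i j ^ 2) * (∑ j, x j ^ 2)) :=
        Real.sqrt_le_sqrt key
    _ = frobNorm M * en x := Real.sqrt_mul (by positivity) _

lemma specNorm_bddAbove {m k : ℕ} (M : Matrix (Fin m) (Fin k) ℝ) :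
    BddAbove (Set.range fun u : {x : Fin k → ℝ // ∑ j, (x j) ^ 2 = 1} =>
      Real.sqrt (∑ i, (M.mulVec u.1 i) ^ 2)) := by
  refine ⟨frobNorm M, ?_⟩
  rintro y ⟨u, rfl⟩
  have h := en_mulVec_le_frob M u.1
  have hu : en u.1 = 1 := by simp [en, u.2]
  calc Real.sqrt (∑ i, (M.mulVec u.1 i) ^ 2) = en (M.mulVec u.1) := rfl
    _ ≤ frobNorm M * en u.1 := h
    _ = frobNorm M := by rw [hu, mul_one]

lemma specNorm_nonneg {m k : ℕ} (M : Matrix (Fin m) (Fin k) ℝ) : 0 ≤ specNorm M :=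
  Real.iSup_nonneg fun _ => Real.sqrt_nonneg _

lemma en_mulVec_le_spec {m k : ℕ} (M : Matrix (Fin m) (Fin k) ℝ) (x : Fin k → ℝ) :
    en (M.mulVec x) ≤ specNorm M * en x := by
  by_cases hx : en x = 0
  · have hs : ∑ j, x j ^ 2 = 0 := by
      have := Real.sqrt_eq_zero (by positivity) |>.mp hx
      exact this
    have hx0 : x = 0 := by
      funext j
      have := (Finset.sum_eq_zero_iff_of_nonneg (fun j _ => sq_nonneg (x j))).mp hs j
        (Finset.mem_univ j)
      exact pow_eq_zero_iff (n := 2) (by norm_num) |>.mp this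
    subst hx0
    simp [en, Matrix.mulVec_zero, specNorm_nonneg]
  · have hpos : 0 < en x := lt_of_le_of_ne (en_nonneg x) (Ne.symm hx)
    set c := en x with hc
    have hsum : ∑ j, x j ^ 2 = c ^ 2 := by
      rw [hc, en, Real.sq_sqrt (by positivity)]
    have hunit : ∑ j, ((c⁻¹ • x) j) ^ 2 = 1 := by
      simp only [Pi.smul_apply, smul_eq_mul, mul_pow, ← Finset.mul_sum, hsum]
      field_simp
    have hle : Real.sqrt (∑ i, (M.mulVec (c⁻¹ • x) i) ^ 2) ≤ specNorm M :=
      le_ciSup (specNorm_bddAbove M) (⟨c⁻¹ • x, hunit⟩ :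
        {x : Fin k → ℝ // ∑ j, (x j) ^ 2 = 1})
    have hmv : M.mulVec (c⁻¹ • x) = c⁻¹ • M.mulVec x := by
      rw [Matrix.mulVec_smul]
    have : en (c⁻¹ • M.mulVec x) ≤ specNorm M := by
      rw [← hmv]; exact hle
    rw [en_smul, abs_of_pos (inv_pos.2 hpos)] at this
    calc en (M.mulVec x) = c * (c⁻¹ * en (M.mulVec x)) := by field_simp
      _ ≤ c * specNorm M := by
          apply mul_le_mul_of_nonneg_left this (le_of_lt hpos)
      _ = specNorm M * en x := by rw [mul_comm]

lemma en_transpose_mulVec_le {m k : ℕ} (M : Matrix (Fin m) (Fin k) ℝ) (x : Fin m → ℝ) :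
    en (Mᵀ.mulVec x) ≤ specNorm M * en x := by
  set s := en (Mᵀ.mulVec x) with hs
  have hsnn : 0 ≤ s := en_nonneg _
  rcases eq_or_lt_of_le hsnn with h0 | hpos
  · rw [← h0]; exact mul_nonneg (specNorm_nonneg M) (en_nonneg x)
  · have hsq : s ^ 2 = ∑ j, (Mᵀ.mulVec x j) ^ 2 := by
      rw [hs, en, Real.sq_sqrt (by positivity)]
    have hdot : ∑ j, (Mᵀ.mulVec x j) ^ 2 = ∑ j, x j * (M.mulVec (Mᵀ.mulVec x)) j := by
      have e1 : (∑ j, x j * (M.mulVec (Mᵀ.mulVec x)) j) = x ⬝ᵥ M.mulVec (Mᵀ.mulVec x) := rfl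
      rw [e1, Matrix.dotProduct_mulVec, ← Matrix.mulVec_transpose]
      simp [dotProduct, sq]
    have hcs : ∑ j, x j * (M.mulVec (Mᵀ.mulVec x)) j ≤ en x * en (M.mulVec (Mᵀ.mulVec x)) :=
      cs_sum _ _
    have hbd : en (M.mulVec (Mᵀ.mulVec x)) ≤ specNorm M * s := en_mulVec_le_spec M _
    have hfinal : s * s ≤ (specNorm M * en x) * s := by
      have h1 : s * s = s ^ 2 := (sq s).symm
      have h2 : en x * en (M.mulVec (Mᵀ.mulVec x)) ≤ en x * (specNorm M * s) :=
        mul_le_mul_of_nonneg_left hbd (en_nonneg x)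
      nlinarith [hsq, hdot, hcs]
    exact le_of_mul_le_mul_right hfinal hpos

lemma norm2inf_nonneg {m k : ℕ} (A : Matrix (Fin m) (Fin k) ℝ) : 0 ≤ norm2inf A :=
  Real.iSup_nonneg fun _ => Real.sqrt_nonneg _

lemma normInfOp_nonneg {m k : ℕ} (A : Matrix (Fin m) (Fin k) ℝ) : 0 ≤ normInfOp A :=
  Real.iSup_nonneg fun _ => Finset.sum_nonneg fun _ _ => abs_nonneg _

lemma row2_eq_en {m k : ℕ} (A : Matrix (Fin m) (Fin k) ℝ) (i : Fin m) :
    row2 A i = en (A i) := rfl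

lemma row2_le_norm2inf {m k : ℕ} (A : Matrix (Fin m) (Fin k) ℝ) (i : Fin m) :
    row2 A i ≤ norm2inf A :=
  le_ciSup (Set.finite_range _).bddAbove i

lemma norm2inf_mul_right_le {m k l : ℕ} (B : Matrix (Fin m) (Fin k) ℝ)
    (R : Matrix (Fin k) (Fin l) ℝ) :
    norm2inf (B * R) ≤ norm2inf B * specNorm R := by
  apply Real.iSup_le _ (mul_nonneg (norm2inf_nonneg B) (specNorm_nonneg R))
  intro i
  have hrow : (B * R) i = Rᵀ.mulVec (B i) := by
    funext j
    simp [Matrix.mul_apply, Matrix.mulVec, dotProduct, Matrix.transpose_apply,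
      mul_comm]
  calc row2 (B * R) i = en (Rᵀ.mulVec (B i)) := by rw [row2_eq_en, hrow]
    _ ≤ specNorm R * en (B i) := en_transpose_mulVec_le R (B i)
    _ ≤ specNorm R * norm2inf B :=
        mul_le_mul_of_nonneg_left (row2_le_norm2inf B i) (specNorm_nonneg R)
    _ = norm2inf B * specNorm R := mul_comm _ _

lemma norm2inf_mul_left_le {m k l : ℕ} (N : Matrix (Fin m) (Fin k) ℝ)
    (X : Matrix (Fin k) (Fin l) ℝ) :
    norm2inf (N * X) ≤ normInfOp N * norm2inf X := by
  apply Real.iSup_le _ (mul_nonneg (normInfOp_nonneg N) (norm2inf_nonneg X))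
  intro i
  have hrow : (N * X) i = ∑ k, N i k • X k := by
    funext j
    simp [Matrix.mul_apply, Finset.sum_apply]
  calc row2 (N * X) i = en (∑ k, N i k • X k) := by rw [row2_eq_en, hrow]
    _ ≤ ∑ k, en (N i k • X k) := en_sum_le _ _
    _ = ∑ k, |N i k| * en (X k) := by simp [en_smul]
    _ ≤ ∑ k, |N i k| * norm2inf X := by
        apply Finset.sum_le_sum
        intro k _
        exact mul_le_mul_of_nonneg_left (row2_le_norm2inf X k) (abs_nonneg _)
    _ = (∑ k, |N i k|) * norm2inf X := by rw [Finset.sum_mul]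
    _ ≤ normInfOp N * norm2inf X := by
        apply mul_le_mul_of_nonneg_right _ (norm2inf_nonneg X)
        exact le_ciSup (f := fun i => ∑ j, |N i j|) (Set.finite_range _).bddAbove i

instance instNonemptyOrth {r : ℕ} : Nonempty {Z : Matrix (Fin r) (Fin r) ℝ // Zᵀ * Z = 1} :=
  ⟨⟨1, by simp⟩⟩

lemma dist2inf_nonneg {n r : ℕ} (Q V : Matrix (Fin n) (Fin r) ℝ) : 0 ≤ dist2inf Q V :=
  le_ciInf fun Z => norm2inf_nonneg _

/-- convergence of the orthogonal component of subspace iteration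
in the ℓ2→∞ norm under the norm bound assumption on V_⊥ Λ_⊥ᵗ V_⊥ᵀ. -/
theorem subspace_iteration_perp_two_to_inf_bound {n r : ℕ} (t : ℕ)
    (A : Matrix (Fin n) (Fin n) ℝ)
    (V Q0 Qt : Matrix (Fin n) (Fin r) ℝ)
    (Vp : Matrix (Fin n) (Fin (n - r)) ℝ)
    (d : Fin r → ℝ) (dp : Fin (n - r) → ℝ)
    (Rt Rtinv : Matrix (Fin r) (Fin r) ℝ)
    (lamr lamr1 C d0 : ℝ)
    (hV : Vᵀ * V = 1) (hVp : Vpᵀ * Vp = 1) (hperp : Vᵀ * Vp = 0)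
    (hA : A = V * Matrix.diagonal d * Vᵀ + Vp * Matrix.diagonal dp * Vpᵀ)
    (hlam_pos : 0 < lamr)
    (hlam_lower : ∀ i, lamr ≤ d i)
    (hlam_upper : ∀ i, |dp i| ≤ lamr1)
    (hgap : lamr1 < lamr)
    (hQ0 : Q0ᵀ * Q0 = 1) (hQt : Qtᵀ * Qt = 1)
    (hiter : Qt * Rt = A ^ t * Q0)
    (hRt : Rt * Rtinv = 1) (hRt' : Rtinv * Rt = 1)
    (hd0 : specNorm (Vpᵀ * Q0) = d0) (hd0lt : d0 < 1)
    (hRtinv : specNorm Rtinv ≤ (lamr ^ t)⁻¹ / Real.sqrt (1 - d0 ^ 2))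
    (hAsm : normInfOp (Vp * (Matrix.diagonal dp) ^ t * Vpᵀ)
      ≤ C * lamr1 ^ t * normInfOp (Vp * Vpᵀ)) :
    norm2inf (Vp * Vpᵀ * Qt)
      ≤ (lamr1 / lamr) ^ t * C * normInfOp (Vp * Vpᵀ) * dist2inf Q0 V
          / Real.sqrt (1 - d0 ^ 2) := by
  -- basic positivity facts
  have hd0nn : 0 ≤ d0 := hd0 ▸ specNorm_nonneg _
  have hsqpos : 0 < Real.sqrt (1 - d0 ^ 2) := Real.sqrt_pos.2 (by nlinarith)
  set sq := Real.sqrt (1 - d0 ^ 2) with hsqdef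
  set N := normInfOp (Vp * Vpᵀ) with hN
  set M := normInfOp (Vp * (Matrix.diagonal dp) ^ t * Vpᵀ) with hM
  set s := specNorm Rtinv with hs
  set D := dist2inf Q0 V with hD
  have hMnn : 0 ≤ M := normInfOp_nonneg _
  have hsnn : 0 ≤ s := specNorm_nonneg _
  have hDnn : 0 ≤ D := dist2inf_nonneg _ _
  have hCN : 0 ≤ C * lamr1 ^ t * N := le_trans hMnn hAsm
  have hbnd : (0:ℝ) ≤ (lamr ^ t)⁻¹ / sq := by positivity
  -- matrix identities
  have hVpV : Vpᵀ * V = (0 : Matrix (Fin (n - r)) (Fin r) ℝ) := by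
    have h := congrArg Matrix.transpose hperp
    simpa [Matrix.transpose_mul] using h
  have hVA : Vpᵀ * A = Matrix.diagonal dp * Vpᵀ := by
    rw [hA, Matrix.mul_add]
    have h1 : Vpᵀ * (V * Matrix.diagonal d * Vᵀ) = 0 := by
      rw [← Matrix.mul_assoc, ← Matrix.mul_assoc, hVpV, Matrix.zero_mul, Matrix.zero_mul]
    have h2 : Vpᵀ * (Vp * Matrix.diagonal dp * Vpᵀ) = Matrix.diagonal dp * Vpᵀ := by
      rw [← Matrix.mul_assoc, ← Matrix.mul_assoc, hVp, Matrix.one_mul]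
    rw [h1, h2, zero_add]
  have hkey : ∀ m : ℕ, Vpᵀ * A ^ m = (Matrix.diagonal dp) ^ m * Vpᵀ := by
    intro m
    induction m with
    | zero => simp
    | succ m ih =>
      calc Vpᵀ * A ^ (m + 1) = (Vpᵀ * A) * A ^ m := by rw [pow_succ', Matrix.mul_assoc]
        _ = Matrix.diagonal dp * (Vpᵀ * A ^ m) := by rw [hVA, Matrix.mul_assoc]
        _ = Matrix.diagonal dp * ((Matrix.diagonal dp) ^ m * Vpᵀ) := by rw [ih]
        _ = (Matrix.diagonal dp) ^ (m + 1) * Vpᵀ := by rw [← Matrix.mul_assoc, ← pow_succ']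
  have hQtv : Qt = A ^ t * Q0 * Rtinv := by
    calc Qt = Qt * (Rt * Rtinv) := by rw [hRt, Matrix.mul_one]
      _ = (Qt * Rt) * Rtinv := by rw [Matrix.mul_assoc]
      _ = A ^ t * Q0 * Rtinv := by rw [hiter]
  have hrepr : ∀ Z : Matrix (Fin r) (Fin r) ℝ,
      Vp * Vpᵀ * Qt
        = (Vp * (Matrix.diagonal dp) ^ t * Vpᵀ) * (Q0 - V * Z) * Rtinv := by
    intro Z
    have h0 : Vpᵀ * (Q0 - V * Z) = Vpᵀ * Q0 := by
      rw [Matrix.mul_sub, ← Matrix.mul_assoc, hVpV, Matrix.zero_mul, sub_zero]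
    calc Vp * Vpᵀ * Qt = Vp * (Vpᵀ * A ^ t) * Q0 * Rtinv := by
          rw [hQtv]; simp only [Matrix.mul_assoc]
      _ = Vp * ((Matrix.diagonal dp) ^ t * Vpᵀ) * Q0 * Rtinv := by rw [hkey]
      _ = Vp * ((Matrix.diagonal dp) ^ t * (Vpᵀ * (Q0 - V * Z))) * Rtinv := by
          rw [h0]; simp only [Matrix.mul_assoc]
      _ = (Vp * (Matrix.diagonal dp) ^ t * Vpᵀ) * (Q0 - V * Z) * Rtinv := by
          simp only [Matrix.mul_assoc]
  -- per-Z bound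
  have h1 : ∀ Z : {Z : Matrix (Fin r) (Fin r) ℝ // Zᵀ * Z = 1},
      norm2inf (Vp * Vpᵀ * Qt) ≤ (M * s) * norm2inf (Q0 - V * Z.1) := by
    intro Z
    calc norm2inf (Vp * Vpᵀ * Qt)
        = norm2inf ((Vp * (Matrix.diagonal dp) ^ t * Vpᵀ) * (Q0 - V * Z.1) * Rtinv) := by
          rw [hrepr Z.1]
      _ ≤ norm2inf ((Vp * (Matrix.diagonal dp) ^ t * Vpᵀ) * (Q0 - V * Z.1)) * s :=
          norm2inf_mul_right_le _ _
      _ ≤ (M * norm2inf (Q0 - V * Z.1)) * s :=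
          mul_le_mul_of_nonneg_right (norm2inf_mul_left_le _ _) hsnn
      _ = (M * s) * norm2inf (Q0 - V * Z.1) := by ring
  -- from per-Z bound to dist bound
  have h2 : norm2inf (Vp * Vpᵀ * Qt) ≤ (M * s) * D := by
    have hMs : 0 ≤ M * s := mul_nonneg hMnn hsnn
    rcases eq_or_lt_of_le hMs with h0 | hpos
    · have := h1 ⟨1, by simp⟩
      rw [← h0, zero_mul] at this ⊢
      exact this
    · rw [hD, dist2inf, mul_comm (M * s), ← div_le_iff₀ hpos]
      apply le_ciInf
      intro Z
      rw [div_le_iff₀ hpos, mul_comm]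
      exact h1 Z
  -- combine with the norm bounds
  have h3 : (M * s) * D ≤ (C * lamr1 ^ t * N) * ((lamr ^ t)⁻¹ / sq) * D := by
    apply mul_le_mul_of_nonneg_right _ hDnn
    exact mul_le_mul hAsm hRtinv hsnn hCN
  have hre : (C * lamr1 ^ t * N) * ((lamr ^ t)⁻¹ / sq) * D
      = (lamr1 / lamr) ^ t * C * N * D / sq := by
    rw [div_pow]
    ring
  calc norm2inf (Vp * Vpᵀ * Qt) ≤ (M * s) * D := h2
    _ ≤ (C * lamr1 ^ t * N) * ((lamr ^ t)⁻¹ / sq) * D := h3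
    _ = (lamr1 / lamr) ^ t * C * N * D / sq := hre
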